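/- arXiv:2011.08491 — 2 statements merged into one kernel-verified Lean document; each statement's English description precedes it below -/
import Mathlib

section
/- Let λ ∈ Γₙ (n ≥ 2), and for η ∈ ℝⁿ define the quadratic form Q(η) = -[Σ_{(i)} γ_{(i)}(Σ_p η_{i_p})]² + Σ_{(i)} γ_{(i)}[Σ_p η_{i_p}]² - Σ_{(i)} γ_{(i)} Σ_p η_{i_p}², where γ_{(i)} = λ_{i₁}⋯λ_{i_k}/σ_k(λ) and sums run over k-subsets. Then for all 2 ≤ k ≤ n-1 and all η ∈ ℝⁿ, Q(η) ≤ -(1/k)·[Σ_{(i)} γ_{(i)}(Σ_p η_{i_p})]² ≤ 0. -/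
open Finset Polynomial

private lemma coeff_trio {R : Type*} [CommRing R] (M : Multiset R) :
    ((M.map (fun b => (1 : R[X]) + C b * X)).prod.coeff 0 = 1) ∧
    ((M.map (fun b => (1 : R[X]) + C b * X)).prod.coeff 1 = M.sum) ∧
    (2 * (M.map (fun b => (1 : R[X]) + C b * X)).prod.coeff 2
      = M.sum ^ 2 - (M.map (fun b => b ^ 2)).sum) := by
  induction M using Multiset.induction with
  | empty => simp [coeff_one]
  | cons b M ih =>
    obtain ⟨h0, h1, h2⟩ := ih
    set P := (M.map (fun b => (1 : R[X]) + C b * X)).prod with hP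
    have key : ∀ j, (((1 : R[X]) + C b * X) * P).coeff (j + 1)
        = P.coeff (j + 1) + b * P.coeff j := by
      intro j
      rw [add_mul, one_mul, coeff_add, mul_assoc, coeff_C_mul, coeff_X_mul]
    have key0 : (((1 : R[X]) + C b * X) * P).coeff 0 = P.coeff 0 := by
      simp [add_mul, coeff_add, mul_assoc, mul_coeff_zero]
    simp only [Multiset.map_cons, Multiset.prod_cons, Multiset.sum_cons, ← hP]
    refine ⟨key0 ▸ h0, ?_, ?_⟩
    · rw [key 0, h1, h0]; ring
    · rw [key 1, mul_add, h1]
      linear_combination h2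

private lemma ms_sq_sum_le (M : Multiset ℝ) :
    M.sum ^ 2 ≤ (Multiset.card M : ℝ) * (M.map (fun b => b ^ 2)).sum := by
  induction M using Multiset.induction with
  | empty => simp
  | cons a M ih =>
    have ht : (0:ℝ) ≤ (M.map (fun b => b ^ 2)).sum := by
      apply Multiset.sum_nonneg
      intro x hx
      obtain ⟨b, _, rfl⟩ := Multiset.mem_map.mp hx
      positivity
    simp only [Multiset.sum_cons, Multiset.card_cons, Multiset.map_cons]
    push_cast
    rcases eq_or_ne M 0 with rfl | hM0
    · simp
    · have hc1 : (1:ℝ) ≤ (Multiset.card M : ℝ) := by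
        have := Multiset.card_pos.mpr hM0
        exact_mod_cast this
      nlinarith [sq_nonneg ((Multiset.card M : ℝ) * a - M.sum), ih, ht]

private lemma ms_sum_im_neg (M : Multiset ℂ) (hM : M ≠ 0) (h : ∀ x ∈ M, x.im < 0) :
    M.sum.im < 0 := by
  induction M using Multiset.induction with
  | empty => simp at hM
  | cons a M ih =>
    have ha := h a (Multiset.mem_cons_self a M)
    rcases eq_or_ne M 0 with rfl | hM0
    · simpa using ha
    · have hih := ih hM0 (fun x hx => h x (Multiset.mem_cons_of_mem hx))
      simp only [Multiset.sum_cons, Complex.add_im]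
      linarith

private lemma ms_sum_im_neg' (M : Multiset ℂ) (hM : M ≠ 0) (h : ∀ x ∈ M, x.im < 0) :
    M.sum.im < 0 := by
  induction M using Multiset.induction with
  | empty => simp at hM
  | cons a M ih =>
    have ha := h a (Multiset.mem_cons_self a M)
    rcases eq_or_ne M 0 with rfl | hM0
    · simpa using ha
    · have hih := ih hM0 (fun x hx => h x (Multiset.mem_cons_of_mem hx))
      simp only [Multiset.sum_cons, Complex.add_im]
      linarith

private lemma eval_derivative_msprod (M : Multiset ℂ) (u : ℂ) (hu : ∀ r ∈ M, u - r ≠ 0) :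
    eval u (derivative (M.map (fun r => X - C r)).prod) =
      eval u (M.map (fun r => X - C r)).prod * (M.map (fun r => (u - r)⁻¹)).sum := by
  induction M using Multiset.induction with
  | empty => simp
  | cons a M ih =>
    have ha := hu a (Multiset.mem_cons_self a M)
    have ih' := ih (fun r hr => hu r (Multiset.mem_cons_of_mem hr))
    simp only [Multiset.map_cons, Multiset.prod_cons, Multiset.sum_cons, derivative_mul,
      derivative_sub, derivative_X, derivative_C, sub_zero, one_mul, eval_add, eval_mul,
      eval_sub, eval_X, eval_C, ih']
    field_simp

private lemma eval_ne_zero_of_roots_im_neg (q : ℂ[X]) (hq : q ≠ 0)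
    (h : ∀ r ∈ q.roots, r.im < 0) (u : ℂ) (hu : 0 ≤ u.im) : eval u q ≠ 0 := by
  intro h0
  have hmem : u ∈ q.roots := by
    rw [mem_roots hq]
    exact h0
  exact absurd (h u hmem) (by linarith)

private lemma derivative_roots_im_neg (q : ℂ[X]) (hq : q ≠ 0)
    (h : ∀ r ∈ q.roots, r.im < 0) (hdeg : q.natDegree ≠ 0) :
    derivative q ≠ 0 ∧ ∀ u ∈ (derivative q).roots, u.im < 0 := by
  have hd : derivative q ≠ 0 := fun h0 => hdeg (natDegree_eq_zero_of_derivative_eq_zero h0)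
  refine ⟨hd, fun u hu => ?_⟩
  by_contra hneg
  push_neg at hneg
  have hroot : eval u (derivative q) = 0 := (mem_roots'.mp hu).2
  have hcard : Multiset.card q.roots = q.natDegree :=
    splits_iff_card_roots.mp (IsAlgClosed.splits q)
  have hfact := C_leadingCoeff_mul_prod_multiset_X_sub_C hcard
  have hune : ∀ r ∈ q.roots, u - r ≠ 0 := by
    intro r hr h0
    have : u = r := by
      have := sub_eq_zero.mp h0; exact this
    rw [this] at hneg
    exact absurd (h r hr) (by linarith)
  have hM : q.roots ≠ 0 := by
    intro h0
    rw [h0] at hcard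
    simp at hcard
    exact hdeg hcard.symm
  have him : ((q.roots).map (fun r => (u - r)⁻¹)).sum.im < 0 := by
    apply ms_sum_im_neg'
    · simpa using hM
    · intro x hx
      obtain ⟨r, hr, rfl⟩ := Multiset.mem_map.mp hx
      rw [Complex.inv_im]
      have h1 : 0 < (u - r).im := by
        rw [Complex.sub_im]; linarith [h r hr]
      have h2 : 0 < Complex.normSq (u - r) := Complex.normSq_pos.mpr (hune r hr)
      apply div_neg_of_neg_of_pos (by linarith) h2
  have hprodne : eval u ((q.roots).map (fun r => X - C r)).prod ≠ 0 := by
    rw [eval_multiset_prod]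
    apply Multiset.prod_ne_zero
    intro h0
    rw [Multiset.map_map] at h0
    obtain ⟨r, hr, hre⟩ := Multiset.mem_map.mp h0
    simp only [Function.comp_apply, eval_sub, eval_X, eval_C] at hre
    exact hune r hr hre
  have hne : eval u (derivative q) ≠ 0 := by
    conv_lhs => rw [← hfact]
    rw [derivative_C_mul, eval_C_mul, eval_derivative_msprod _ _ hune]
    refine mul_ne_zero (leadingCoeff_ne_zero.mpr hq) (mul_ne_zero hprodne ?_)
    intro h0
    rw [h0] at him
    simp at him
  exact hne hroot

private lemma iterate_roots_im_neg (q : ℂ[X]) (hq : q ≠ 0) (h : ∀ r ∈ q.roots, r.im < 0) :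
    ∀ m, m ≤ q.natDegree →
      (derivative^[m] q ≠ 0 ∧ (derivative^[m] q).natDegree = q.natDegree - m ∧
        ∀ r ∈ (derivative^[m] q).roots, r.im < 0) := by
  intro m
  induction m with
  | zero => exact fun _ => ⟨hq, by simp, h⟩
  | succ m ih =>
    intro hm
    obtain ⟨h1, h2, h3⟩ := ih (by omega)
    have hdm : (derivative^[m] q).natDegree ≠ 0 := by omega
    obtain ⟨hd1, hd3⟩ := derivative_roots_im_neg _ h1 h3 hdm
    refine ⟨by rwa [Function.iterate_succ_apply'], ?_, by rwa [Function.iterate_succ_apply']⟩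
    rw [Function.iterate_succ_apply']
    have := degree_derivative_eq (derivative^[m] q) (by omega)
    have := natDegree_eq_of_degree_eq_some this
    omega

private lemma esymm_ne_zero (n k : ℕ) (hkn : k ≤ n) (z : Fin n → ℂ)
    (hz : ∀ i, 0 < (z i).im) :
    (∑ t ∈ (univ : Finset (Fin n)).powersetCard k, ∏ i ∈ t, z i) ≠ 0 := by
  set q : ℂ[X] := ∏ i : Fin n, (X + C (z i)) with hqdef
  have hmono : q.Monic := monic_prod_of_monic _ _ (fun i _ => monic_X_add_C _)
  have hq : q ≠ 0 := hmono.ne_zero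
  have hprodne : (∏ i : Fin n, (X + C (z i))) ≠ 0 := by rwa [← hqdef]
  have hdeg : q.natDegree = n := by
    rw [hqdef, natDegree_prod_of_monic _ _ (fun i _ => monic_X_add_C _)]
    simp [natDegree_X_add_C]
  have hroots : ∀ r ∈ q.roots, r.im < 0 := by
    intro r hr
    rw [hqdef, roots_prod _ _ hprodne] at hr
    obtain ⟨i, _, hri⟩ := Multiset.mem_bind.mp hr
    have : (X + C (z i)) = (X - C (-(z i))) := by rw [map_neg, sub_neg_eq_add]
    rw [this, roots_X_sub_C, Multiset.mem_singleton] at hri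
    rw [hri]
    simpa using hz i
  obtain ⟨hne, _, him⟩ := iterate_roots_im_neg q hq hroots (n - k) (hdeg ▸ Nat.sub_le n k)
  have h0 : eval 0 (derivative^[n - k] q) ≠ 0 :=
    eval_ne_zero_of_roots_im_neg _ hne him 0 (by simp)
  rw [← coeff_zero_eq_eval_zero, coeff_iterate_derivative] at h0
  have hcoeff : q.coeff (0 + (n - k)) =
      ∑ t ∈ (univ : Finset (Fin n)).powersetCard k, ∏ i ∈ t, z i := by
    rw [zero_add, hqdef, Finset.prod_X_add_C_coeff _ _ (by simp only [card_univ, Fintype.card_fin]; omega)]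
    have hnk : (univ : Finset (Fin n)).card - (n - k) = k := by
      simp only [card_univ, Fintype.card_fin]; omega
    rw [hnk]
  intro hzero
  rw [hcoeff, hzero, smul_zero] at h0
  exact h0 rfl

/-- σ_k(λ): the k-th elementary symmetric polynomial. -/
def esymmFun (n k : ℕ) (lam : Fin n → ℝ) : ℝ :=
  ∑ t ∈ (univ : Finset (Fin n)).powersetCard k, ∏ i ∈ t, lam i

/-- γ_{(i)} = λ_{i₁}⋯λ_{i_k}/σ_k(λ) for a k-subset (i). -/
noncomputable def gam (n k : ℕ) (lam : Fin n → ℝ) (t : Finset (Fin n)) : ℝ :=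
  (∏ i ∈ t, lam i) / esymmFun n k lam

/-- The quadratic form Q(η) = -A + B - C, the second differential of
log σ_k at λ in rescaled direction λ·η. -/
noncomputable def Qform (n k : ℕ) (lam η : Fin n → ℝ) : ℝ :=
  -(∑ t ∈ (univ : Finset (Fin n)).powersetCard k,
      gam n k lam t * ∑ p ∈ t, η p) ^ 2 +
    ∑ t ∈ (univ : Finset (Fin n)).powersetCard k,
      gam n k lam t * (∑ p ∈ t, η p) ^ 2 -
    ∑ t ∈ (univ : Finset (Fin n)).powersetCard k,
      gam n k lam t * ∑ p ∈ t, (η p) ^ 2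

/-- For 2 ≤ k ≤ n-1 and λ in the positive cone,
Q(η) ≤ -(1/k)·[Σ γ(Σ_p η_{i_p})]² ≤ 0. -/
theorem stmt15 (n k : ℕ) (hn : 2 ≤ n) (hk2 : 2 ≤ k) (hkn : k ≤ n - 1)
    (lam : Fin n → ℝ) (hlam : ∀ i, 0 < lam i) (η : Fin n → ℝ) :
    Qform n k lam η ≤
      -(1 / k) * (∑ t ∈ (univ : Finset (Fin n)).powersetCard k,
        gam n k lam t * ∑ p ∈ t, η p) ^ 2 ∧
    -(1 / k : ℝ) * (∑ t ∈ (univ : Finset (Fin n)).powersetCard k,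
        gam n k lam t * ∑ p ∈ t, η p) ^ 2 ≤ 0 := by
  classical
  have hkn' : k ≤ n := le_trans hkn (Nat.sub_le n 1)
  have hk0 : (0:ℝ) < (k:ℝ) := by
    have : 0 < k := by omega
    exact_mod_cast this
  simp only [Qform]
  set A := ∑ t ∈ (univ : Finset (Fin n)).powersetCard k, gam n k lam t * ∑ p ∈ t, η p with hA
  set Bq := ∑ t ∈ (univ : Finset (Fin n)).powersetCard k,
    gam n k lam t * (∑ p ∈ t, η p) ^ 2 with hBq
  set Cq := ∑ t ∈ (univ : Finset (Fin n)).powersetCard k,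
    gam n k lam t * ∑ p ∈ t, (η p) ^ 2 with hCq
  set S := esymmFun n k lam with hSdef
  have hS : 0 < S := by
    rw [hSdef, esymmFun]
    apply Finset.sum_pos
    · intro t ht
      exact Finset.prod_pos fun i _ => hlam i
    · obtain ⟨t, _, htc⟩ := Finset.exists_subset_card_eq
        (show k ≤ (univ : Finset (Fin n)).card by simpa using hkn')
      exact ⟨t, mem_powersetCard_univ.mpr htc⟩
  have hSne : S ≠ 0 := ne_of_gt hS
  set φ : ℝ[X] := ∑ t ∈ (univ : Finset (Fin n)).powersetCard k,
      C (∏ i ∈ t, lam i) * ∏ i ∈ t, (1 + C (η i) * X) with hφ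
  have hG : ∀ t : Finset (Fin n),
      ((∏ i ∈ t, ((1:ℝ[X]) + C (η i) * X)).coeff 0 = 1) ∧
      ((∏ i ∈ t, ((1:ℝ[X]) + C (η i) * X)).coeff 1 = ∑ p ∈ t, η p) ∧
      (2 * (∏ i ∈ t, ((1:ℝ[X]) + C (η i) * X)).coeff 2
        = (∑ p ∈ t, η p) ^ 2 - ∑ p ∈ t, (η p) ^ 2) := by
    intro t
    have e1 : (∏ i ∈ t, ((1:ℝ[X]) + C (η i) * X))
        = ((t.val.map η).map (fun b => (1:ℝ[X]) + C b * X)).prod := by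
      rw [Multiset.map_map, Finset.prod_eq_multiset_prod]
      rfl
    have e2 : (t.val.map η).sum = ∑ p ∈ t, η p := rfl
    have e3 : ((t.val.map η).map (fun b => b ^ 2)).sum = ∑ p ∈ t, (η p) ^ 2 := by
      rw [Multiset.map_map]
      rfl
    obtain ⟨c0, c1, c2⟩ := coeff_trio (t.val.map η)
    refine ⟨by rw [e1]; exact c0, by rw [e1, c1, e2], by rw [e1, c2, e2, e3]⟩
  have hgam : ∀ (t : Finset (Fin n)) (x : ℝ),
      S * (gam n k lam t * x) = (∏ i ∈ t, lam i) * x := by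
    intro t x
    rw [gam, ← hSdef]
    field_simp
  have hφ0 : φ.coeff 0 = S := by
    rw [hφ, finset_sum_coeff, hSdef, esymmFun]
    apply Finset.sum_congr rfl
    intro t ht
    rw [coeff_C_mul, (hG t).1, mul_one]
  have hφ1 : φ.coeff 1 = S * A := by
    rw [hA, Finset.mul_sum, hφ, finset_sum_coeff]
    apply Finset.sum_congr rfl
    intro t ht
    rw [coeff_C_mul, (hG t).2.1]
    exact (hgam t _).symm
  have hφ2 : 2 * φ.coeff 2 = S * (Bq - Cq) := by
    have hrhs : S * (Bq - Cq) = ∑ t ∈ (univ : Finset (Fin n)).powersetCard k,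
        (S * (gam n k lam t * (∑ p ∈ t, η p) ^ 2) - S * (gam n k lam t * ∑ p ∈ t, (η p) ^ 2)) := by
      rw [hBq, hCq, mul_sub, Finset.mul_sum, Finset.mul_sum, Finset.sum_sub_distrib]
    rw [hrhs, hφ, finset_sum_coeff, Finset.mul_sum]
    apply Finset.sum_congr rfl
    intro t ht
    rw [coeff_C_mul, hgam, hgam]
    have h2 := (hG t).2.2
    linear_combination (∏ i ∈ t, lam i) * h2
  have hdegφ : φ.natDegree ≤ k := by
    rw [hφ]
    apply natDegree_sum_le_of_forall_le
    intro t ht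
    apply le_trans (natDegree_C_mul_le _ _)
    apply le_trans (natDegree_prod_le _ _)
    have hct : t.card = k := mem_powersetCard_univ.mp ht
    calc ∑ i ∈ t, ((1:ℝ[X]) + C (η i) * X).natDegree
        ≤ ∑ i ∈ t, 1 := by
          apply Finset.sum_le_sum
          intro i _
          apply le_trans (natDegree_add_le _ _)
          apply max_le (by simp)
          exact le_trans (natDegree_C_mul_le _ _) (by simp)
      _ = k := by rw [Finset.sum_const, smul_eq_mul, mul_one, hct]
  set Φ : ℂ[X] := φ.map (algebraMap ℝ ℂ) with hΦ
  have hcoeffΦ : ∀ j, Φ.coeff j = ((φ.coeff j : ℝ) : ℂ) := by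
    intro j
    rw [hΦ, coeff_map]
    rfl
  have hΦne : Φ ≠ 0 := by
    intro h0
    have h1 := hcoeffΦ 0
    rw [h0, coeff_zero, hφ0] at h1
    exact hSne (by exact_mod_cast h1.symm)
  have hdegΦ : Φ.natDegree = φ.natDegree :=
    natDegree_map_eq_of_injective (algebraMap ℝ ℂ).injective φ
  have hcard : Multiset.card Φ.roots = Φ.natDegree :=
    splits_iff_card_roots.mp (IsAlgClosed.splits Φ)
  have heval : ∀ r : ℂ, eval r Φ = ∑ t ∈ (univ : Finset (Fin n)).powersetCard k,
      (∏ i ∈ t, (lam i : ℂ)) * ∏ i ∈ t, (1 + (η i : ℂ) * r) := by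
    intro r
    rw [hΦ, eval_map, hφ]
    rw [eval₂_finset_sum]
    apply Finset.sum_congr rfl
    intro t ht
    rw [eval₂_mul, eval₂_C, eval₂_finset_prod]
    congr 1
    · push_cast
      rfl
    · apply Finset.prod_congr rfl
      intro i _
      rw [eval₂_add, eval₂_one, eval₂_mul, eval₂_C, eval₂_X]
      norm_num
  have hroot_ne : ∀ r ∈ Φ.roots, r ≠ 0 := by
    intro r hr h0
    have hev : eval r Φ = 0 := (mem_roots'.mp hr).2
    rw [h0, ← coeff_zero_eq_eval_zero, hcoeffΦ 0, hφ0] at hev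
    exact hSne (by exact_mod_cast hev)
  have hroot_im : ∀ r ∈ Φ.roots, r.im = 0 := by
    intro r hr
    by_contra him
    have hr0 : r ≠ 0 := hroot_ne r hr
    have hev : eval r Φ = 0 := (mem_roots'.mp hr).2
    rw [heval] at hev
    set w : Fin n → ℂ := fun i => ((lam i * η i : ℝ) : ℂ) + r⁻¹ * ((lam i : ℝ) : ℂ) with hw
    have hkey : ∀ t ∈ (univ : Finset (Fin n)).powersetCard k,
        (∏ i ∈ t, (lam i : ℂ)) * ∏ i ∈ t, (1 + (η i : ℂ) * r) = r ^ k * ∏ i ∈ t, w i := by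
      intro t ht
      have hct : t.card = k := mem_powersetCard_univ.mp ht
      rw [← hct, ← Finset.prod_const, ← Finset.prod_mul_distrib, ← Finset.prod_mul_distrib]
      apply Finset.prod_congr rfl
      intro i _
      rw [hw]
      push_cast
      field_simp
      ring
    rw [Finset.sum_congr rfl hkey, ← Finset.mul_sum] at hev
    have hsum0 : (∑ t ∈ (univ : Finset (Fin n)).powersetCard k, ∏ i ∈ t, w i) = 0 := by
      rcases mul_eq_zero.mp hev with h | h
      · exact absurd h (pow_ne_zero _ hr0)
      · exact h
    have hwim : ∀ i, (w i).im = r⁻¹.im * lam i := by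
      intro i
      rw [hw]
      simp [Complex.add_im, Complex.mul_im]
    rcases lt_trichotomy r⁻¹.im 0 with hc | hc | hc
    · apply esymm_ne_zero n k hkn' (fun i => (starRingEnd ℂ) (w i)) ?_ ?_
      · intro i
        rw [Complex.conj_im, hwim i]
        have := mul_neg_of_neg_of_pos hc (hlam i)
        linarith
      · rw [show (∑ t ∈ (univ : Finset (Fin n)).powersetCard k, ∏ i ∈ t, (starRingEnd ℂ) (w i))
            = (starRingEnd ℂ) (∑ t ∈ (univ : Finset (Fin n)).powersetCard k, ∏ i ∈ t, w i) by
          rw [map_sum]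
          exact Finset.sum_congr rfl fun t _ => (map_prod _ _ _).symm]
        rw [hsum0, map_zero]
    · rw [Complex.inv_im] at hc
      have hns : 0 < Complex.normSq r := Complex.normSq_pos.mpr hr0
      have : r.im = 0 := by
        field_simp at hc
        simpa using hc
      exact him this
    · exact esymm_ne_zero n k hkn' w (fun i => by rw [hwim i]; exact mul_pos hc (hlam i)) hsum0
  set Rts := Φ.roots with hRts
  have hfact := C_leadingCoeff_mul_prod_multiset_X_sub_C hcard
  set Bc : Multiset ℂ := Rts.map (fun r => -r⁻¹) with hBc
  have hfactor2 : (Rts.map (fun a => X - C a)).prod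
      = C ((Rts.map (fun r => -r)).prod) * (Bc.map (fun b => (1:ℂ[X]) + C b * X)).prod := by
    have hcongr : Rts.map (fun a => X - C a)
        = Rts.map (fun r => C (-r) * ((1:ℂ[X]) + C (-r⁻¹) * X)) := by
      apply Multiset.map_congr rfl
      intro r hr
      have hr0 : r ≠ 0 := hroot_ne r hr
      rw [mul_add, mul_one, ← mul_assoc, ← C_mul, neg_mul_neg, mul_inv_cancel₀ hr0, C_1,
        one_mul, map_neg]
      ring
    rw [hcongr, Multiset.prod_map_mul]
    congr 1
    · rw [show Rts.map (fun r => C (-r)) = (Rts.map (fun r => -r)).map C from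
        (Multiset.map_map C (fun r => -r) Rts).symm]
      exact ((C : ℂ →+* ℂ[X]).map_multiset_prod _).symm
    · rw [hBc, Multiset.map_map]
      rfl
  set c0 : ℂ := Φ.leadingCoeff * (Rts.map (fun r => -r)).prod with hc0
  have hΦeq : Φ = C c0 * (Bc.map (fun b => (1:ℂ[X]) + C b * X)).prod := by
    conv_lhs => rw [← hfact]
    rw [hfactor2, ← mul_assoc, ← C_mul, hc0]
  obtain ⟨t0, t1, t2⟩ := coeff_trio Bc
  have hco : ∀ j, Φ.coeff j = c0 * ((Bc.map (fun b => (1:ℂ[X]) + C b * X)).prod.coeff j) := by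
    intro j
    conv_lhs => rw [hΦeq]
    rw [coeff_C_mul]
  have hc0S : c0 = ((S : ℝ) : ℂ) := by
    have h0' := hco 0
    rw [t0, mul_one] at h0'
    rw [← h0', hcoeffΦ 0, hφ0]
  have hSCne : ((S:ℝ):ℂ) ≠ 0 := by exact_mod_cast hSne
  have hBsum : Bc.sum = ((A : ℝ) : ℂ) := by
    have h1 := hco 1
    rw [t1, hc0S, hcoeffΦ 1, hφ1] at h1
    push_cast at h1
    exact (mul_left_cancel₀ hSCne h1).symm
  have hBsq : (Bc.map (fun b => b ^ 2)).sum = ((A^2 - (Bq - Cq) : ℝ) : ℂ) := by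
    have key : ((S:ℝ):ℂ) * (Bc.sum ^ 2 - (Bc.map (fun b => b ^ 2)).sum)
        = ((S:ℝ):ℂ) * ((Bq - Cq : ℝ) : ℂ) := by
      calc ((S:ℝ):ℂ) * (Bc.sum ^ 2 - (Bc.map (fun b => b ^ 2)).sum)
          = c0 * (2 * ((Bc.map (fun b => (1:ℂ[X]) + C b * X)).prod.coeff 2)) := by
            rw [t2, hc0S]
        _ = 2 * Φ.coeff 2 := by rw [hco 2]; ring
        _ = ((2 * φ.coeff 2 : ℝ) : ℂ) := by rw [hcoeffΦ 2]; push_cast; ring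
        _ = ((S * (Bq - Cq) : ℝ) : ℂ) := by rw [hφ2]
        _ = ((S:ℝ):ℂ) * ((Bq - Cq : ℝ) : ℂ) := by push_cast; ring
    have key2 := mul_left_cancel₀ hSCne key
    rw [hBsum] at key2
    push_cast
    push_cast at key2
    linear_combination -key2
  set Br : Multiset ℝ := Bc.map Complex.re with hBr
  have hBc_im : ∀ b ∈ Bc, b.im = 0 := by
    intro b hb
    rw [hBc] at hb
    obtain ⟨r, hr, rfl⟩ := Multiset.mem_map.mp hb
    have := hroot_im r hr
    simp [Complex.inv_im, this]
  have hBc_eq : Br.map (fun x => ((x:ℝ) : ℂ)) = Bc := by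
    rw [hBr, Multiset.map_map]
    have hid : ∀ b ∈ Bc, ((b.re : ℝ) : ℂ) = b := fun b hb =>
      Complex.ext (by simp) (by simp [hBc_im b hb])
    calc Bc.map ((fun x => ((x:ℝ):ℂ)) ∘ Complex.re)
        = Bc.map id := Multiset.map_congr rfl (fun b hb => hid b hb)
      _ = Bc := Multiset.map_id _
  have hcast : ∀ M : Multiset ℝ, ((M.sum : ℝ) : ℂ) = (M.map (fun x => ((x:ℝ):ℂ))).sum := by
    intro M
    induction M using Multiset.induction with
    | empty => simp
    | cons a M ih => simp [ih]
  have hAr : A = Br.sum := by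
    have h1 : ((Br.sum : ℝ) : ℂ) = ((A:ℝ):ℂ) := by
      rw [hcast, hBc_eq, hBsum]
    exact_mod_cast h1.symm
  have hsqr : (Br.map (fun b => b ^ 2)).sum = A^2 - (Bq - Cq) := by
    have h1 : (((Br.map (fun b => b ^ 2)).sum : ℝ) : ℂ) = ((A^2 - (Bq - Cq) : ℝ) : ℂ) := by
      rw [hcast, Multiset.map_map, ← hBsq, hBr, Multiset.map_map]
      congr 1
      apply Multiset.map_congr rfl
      intro b hb
      have hb' : ((b.re : ℝ) : ℂ) = b := Complex.ext (by simp) (by simp [hBc_im b hb])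
      simp only [Function.comp_apply]
      push_cast
      rw [hb']
    exact_mod_cast h1
  have hcardBr : (Multiset.card Br : ℝ) ≤ (k : ℝ) := by
    have h1 : Multiset.card Br = Multiset.card Rts := by
      rw [hBr, hBc, Multiset.card_map, Multiset.card_map]
    have h2 : Multiset.card Rts ≤ k := by
      rw [hRts, hcard, hdegΦ]
      exact hdegφ
    rw [h1]
    exact_mod_cast h2
  have hT2 : 0 ≤ A^2 - (Bq - Cq) := by
    rw [← hsqr]
    apply Multiset.sum_nonneg
    intro x hx
    obtain ⟨b, _, rfl⟩ := Multiset.mem_map.mp hx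
    positivity
  have hCS : A^2 ≤ (k:ℝ) * (A^2 - (Bq - Cq)) := by
    calc A^2 = Br.sum ^ 2 := by rw [hAr]
      _ ≤ (Multiset.card Br : ℝ) * (Br.map (fun b => b ^ 2)).sum := ms_sq_sum_le Br
      _ ≤ (k:ℝ) * (Br.map (fun b => b ^ 2)).sum := by
          apply mul_le_mul_of_nonneg_right hcardBr
          rw [hsqr]; exact hT2
      _ = (k:ℝ) * (A^2 - (Bq - Cq)) := by rw [hsqr]
  constructor
  · have h2 : (1/(k:ℝ)) * A^2 ≤ (1/(k:ℝ)) * ((k:ℝ) * (A^2 - (Bq - Cq))) :=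
      mul_le_mul_of_nonneg_left hCS (by positivity)
    have h3 : (1/(k:ℝ)) * ((k:ℝ) * (A^2 - (Bq - Cq))) = A^2 - (Bq - Cq) := by
      field_simp
    linarith
  · have h4 : 0 ≤ (1/(k:ℝ)) * A^2 := by positivity
    linarith
end

section
/- Let 2 ≤ k ≤ n-1, λ ∈ Γₙ, and suppose the quadratic form η ↦ d²f_k(λ, λη) (the second differential of f_k(λ)=log σ_k(λ) in rescaled direction λη) is negative semidefinite on ℝⁿ and vanishes at some η̄ ≠ 0. Then the n×n matrix G_k(λ) with entries G_k(λ)_{ij} = σ_{k-2}^{(i,j)}(λ) for i ≠ j and 0 on the diagonal is singular. Conversely, if G_k(λ) is nonsingular then d²f_k(λ, λη) < 0 for all η ≠ 0. -/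
open Finset Matrix

/-- σ_m^{(i,j)}(λ): σ_m of λ with λᵢ and λⱼ set to 0. -/
def esymmOmit2 (n m : ℕ) (i j : Fin n) (lam : Fin n → ℝ) : ℝ :=
  ∑ t ∈ ((univ : Finset (Fin n)) \ {i, j}).powersetCard m, ∏ p ∈ t, lam p

/-- The matrix G_k(λ) with off-diagonal entries σ_{k-2}^{(i,j)}(λ) and zero
diagonal. -/
noncomputable def Gmat (n k : ℕ) (lam : Fin n → ℝ) : Matrix (Fin n) (Fin n) ℝ :=
  Matrix.of fun i j => if i = j then 0 else esymmOmit2 n (k - 2) i j lam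

namespace St17
open Polynomial

/-- multiset product of (X - r) : log-derivative formula at a point avoiding roots -/
lemma eval_derivative_multiset_prod (m : Multiset ℂ) (w : ℂ) :
    (derivative (m.map (fun r => X - C r)).prod).eval w =
      ((m.map (fun r => X - C r)).prod.eval w) * (m.map (fun r => (w - r)⁻¹)).sum ∨
    ∃ r ∈ m, w = r := by
  induction m using Multiset.induction_on with
  | empty => simp
  | cons a s ih =>
    by_cases ha : w = a
    · exact Or.inr ⟨a, Multiset.mem_cons_self a s, ha⟩
    rcases ih with h | ⟨r, hr, hw⟩
    · left
      simp only [Multiset.map_cons, Multiset.prod_cons, derivative_mul, Multiset.sum_cons]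
      rw [eval_add, eval_mul, eval_mul, h]
      simp only [derivative_sub, derivative_X, derivative_C, sub_zero, eval_one, eval_sub,
        eval_X, eval_C]
      field_simp [sub_ne_zero.mpr ha]
      simp only [eval_sub, eval_mul, eval_X, eval_C]
      ring
    · exact Or.inr ⟨r, Multiset.mem_cons_of_mem hr, hw⟩

lemma im_multiset_sum (m : Multiset ℂ) : m.sum.im = (m.map Complex.im).sum := by
  induction m using Multiset.induction_on with
  | empty => simp
  | cons a s ih => simp [ih]

/-- Good q : nonzero with all roots in the open lower half plane -/
def Good (q : Polynomial ℂ) : Prop := q ≠ 0 ∧ ∀ z ∈ q.roots, z.im < 0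

lemma Good.eval_ne_zero {q : Polynomial ℂ} (hq : Good q) {w : ℂ} (hw : 0 ≤ w.im) :
    q.eval w ≠ 0 := by
  intro h
  have : w ∈ q.roots := by
    rw [mem_roots hq.1]; exact h
  exact absurd (hq.2 w this) (not_lt.mpr hw)

lemma msum_im_nonpos (m : Multiset ℂ) (h : ∀ x ∈ m, x.im ≤ 0) : m.sum.im ≤ 0 := by
  rw [im_multiset_sum]
  induction m using Multiset.induction_on with
  | empty => simp
  | cons a s ih =>
    simp only [Multiset.map_cons, Multiset.sum_cons]
    have := h a (Multiset.mem_cons_self a s)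
    have h2 : (Multiset.map Complex.im s).sum ≤ 0 :=
      ih (fun x hx => h x (Multiset.mem_cons_of_mem hx))
    linarith

lemma msum_im_neg (m : Multiset ℂ) (hne : m ≠ 0) (h : ∀ x ∈ m, x.im < 0) : m.sum.im < 0 := by
  obtain ⟨a, ha⟩ := Multiset.exists_mem_of_ne_zero hne
  rw [← Multiset.cons_erase ha, Multiset.sum_cons, Complex.add_im]
  have h1 := h a ha
  have h2 := msum_im_nonpos (m.erase a) (fun x hx => (h x (Multiset.mem_of_mem_erase hx)).le)
  linarith

lemma natDegree_derivative_eq' {q : Polynomial ℂ} (hq : q.natDegree ≠ 0) :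
    (derivative q).natDegree = q.natDegree - 1 := by
  have hq0 : q ≠ 0 := fun h => hq (by simp [h])
  refine le_antisymm (natDegree_derivative_le q) ?_
  apply le_natDegree_of_ne_zero
  rw [coeff_derivative, Nat.sub_add_cancel (Nat.one_le_iff_ne_zero.mpr hq)]
  have h1 : q.coeff q.natDegree ≠ 0 := leadingCoeff_ne_zero.mpr hq0
  have h2 : ((q.natDegree - 1 : ℕ) : ℂ) + 1 ≠ 0 := Nat.cast_add_one_ne_zero (q.natDegree - 1)
  exact mul_ne_zero h1 h2

lemma Good.derivative {q : Polynomial ℂ} (hq : Good q) (hd : q.natDegree ≠ 0) :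
    Good (Polynomial.derivative q) := by
  have hq0 := hq.1
  have hd0 : Polynomial.derivative q ≠ 0 := fun h => hd (natDegree_eq_zero_of_derivative_eq_zero h)
  refine ⟨hd0, fun z hz => ?_⟩
  by_contra hzim
  push_neg at hzim
  have hzq : q.eval z ≠ 0 := hq.eval_ne_zero hzim
  have hsplit : q = C q.leadingCoeff * (q.roots.map fun a => X - C a).prod :=
    (IsAlgClosed.splits q).eq_prod_roots
  have hcard : q.roots.card = q.natDegree := (splits_iff_card_roots).mp (IsAlgClosed.splits q)
  have hne : q.roots ≠ 0 := by
    intro h; rw [h] at hcard; simp at hcard; exact hd hcard.symm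
  rcases eval_derivative_multiset_prod q.roots z with hfor | ⟨r, hr, hzr⟩
  swap
  · exact absurd (hzr ▸ hq.2 r hr) (not_lt.mpr hzim)
  have hz0 : (Polynomial.derivative q).eval z = 0 := (mem_roots hd0).mp hz
  have hder : Polynomial.derivative q = C q.leadingCoeff *
      Polynomial.derivative (q.roots.map fun a => X - C a).prod := by
    conv_lhs => rw [hsplit]
    rw [derivative_C_mul]
  rw [hder, eval_mul, eval_C, hfor] at hz0
  have hlc : q.leadingCoeff ≠ 0 := leadingCoeff_ne_zero.mpr hq0
  have hprodne : ((q.roots.map fun a => X - C a).prod).eval z ≠ 0 := by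
    intro h
    rw [hsplit, eval_mul, eval_C, h, mul_zero] at hzq
    exact hzq rfl
  have hsum : ((q.roots.map fun r => (z - r)⁻¹).sum).im < 0 := by
    apply msum_im_neg
    · simpa using hne
    · intro x hx
      obtain ⟨r, hr, rfl⟩ := Multiset.mem_map.mp hx
      rw [Complex.inv_im]
      apply div_neg_of_neg_of_pos
      · simp only [Complex.sub_im, neg_neg_iff_pos, neg_lt, neg_zero]
        have := hq.2 r hr; linarith
      · rw [Complex.normSq_pos, sub_ne_zero]
        intro h; exact absurd (h ▸ hq.2 r hr) (not_lt.mpr hzim)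
  have hsumne : ((q.roots.map fun r => (z - r)⁻¹).sum) ≠ 0 := by
    intro h; rw [h] at hsum; simp at hsum
  exact (mul_ne_zero hlc (mul_ne_zero hprodne hsumne)) hz0


lemma esymm_ne_zero (n k : ℕ) (hk : 1 ≤ k) (hkn : k ≤ n) (z : Fin n → ℂ)
    (hz : ∀ i, 0 < (z i).im) :
    ∑ T ∈ (univ : Finset (Fin n)).powersetCard k, ∏ i ∈ T, z i ≠ 0 := by
  set p : Polynomial ℂ := ∏ i : Fin n, (X + C (z i)) with hp
  have hmono : ∀ i : Fin n, (X + C (z i)) ≠ (0 : Polynomial ℂ) :=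
    fun i => (monic_X_add_C (z i)).ne_zero
  have hdeg : p.natDegree = n := by
    rw [hp, natDegree_prod _ _ (fun i _ => hmono i)]
    simp [natDegree_X_add_C]
  have hgood : Good p := by
    constructor
    · exact prod_ne_zero_iff.mpr (fun i _ => hmono i)
    · intro r hr
      have h0 : p.eval r = 0 := (mem_roots (prod_ne_zero_iff.mpr (fun i _ => hmono i))).mp hr
      rw [hp, eval_prod] at h0
      obtain ⟨i, _, hi⟩ := Finset.prod_eq_zero_iff.mp h0
      simp only [eval_add, eval_X, eval_C] at hi
      have : r = -z i := by linear_combination hi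
      rw [this]
      simp [hz i]
  have key : ∀ j, j ≤ n - k → Good (Polynomial.derivative^[j] p) ∧
      (Polynomial.derivative^[j] p).natDegree = n - j := by
    intro j
    induction j with
    | zero => intro _; exact ⟨hgood, by simpa using hdeg⟩
    | succ m ih =>
      intro hm
      obtain ⟨hg, hd⟩ := ih (le_trans (Nat.le_succ m) hm)
      have hne : (Polynomial.derivative^[m] p).natDegree ≠ 0 := by
        rw [hd]
        omega
      refine ⟨?_, ?_⟩
      · rw [Function.iterate_succ_apply']
        exact hg.derivative hne
      · rw [Function.iterate_succ_apply', natDegree_derivative_eq' hne, hd]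
        omega
  obtain ⟨hgq, _⟩ := key (n - k) le_rfl
  have heval : (Polynomial.derivative^[n - k] p).eval 0 ≠ 0 :=
    hgq.eval_ne_zero (by simp)
  rw [← coeff_zero_eq_eval_zero, coeff_iterate_derivative] at heval
  have hco : p.coeff (0 + (n - k)) = ∑ T ∈ (univ : Finset (Fin n)).powersetCard k, ∏ i ∈ T, z i := by
    rw [zero_add, hp, Finset.prod_X_add_C_coeff univ z (by simp [hkn])]
    congr 1
    simp only [card_univ, Fintype.card_fin]
    congr 1
    omega
  rw [hco] at heval
  intro h
  rw [h] at heval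
  simp at heval

noncomputable def gP (n k : ℕ) (lam v : Fin n → ℝ) : Polynomial ℝ :=
  ∑ T ∈ (univ : Finset (Fin n)).powersetCard k, ∏ i ∈ T, (C (lam i) + C (v i) * X)

lemma gP_map_eval (n k : ℕ) (lam v : Fin n → ℝ) (w : ℂ) :
    ((gP n k lam v).map (algebraMap ℝ ℂ)).eval w =
      ∑ T ∈ (univ : Finset (Fin n)).powersetCard k, ∏ i ∈ T, ((lam i : ℂ) + (v i) * w) := by
  rw [eval_map, gP, eval₂_finset_sum]
  refine Finset.sum_congr rfl fun T _ => ?_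
  rw [eval₂_finset_prod]
  refine Finset.prod_congr rfl fun i _ => ?_
  simp [eval₂_add, eval₂_mul, eval₂_C, eval₂_X]

lemma gP_eval (n k : ℕ) (lam v : Fin n → ℝ) (x : ℝ) :
    (gP n k lam v).eval x =
      ∑ T ∈ (univ : Finset (Fin n)).powersetCard k, ∏ i ∈ T, (lam i + v i * x) := by
  rw [gP, eval_finset_sum]
  refine Finset.sum_congr rfl fun T _ => ?_
  rw [eval_prod]
  simp

/-- reversed polynomial nonvanishing off the real axis -/
lemma gT_ne_zero (n k : ℕ) (hk : 1 ≤ k) (hkn : k ≤ n) (lam v : Fin n → ℝ)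
    (hlam : ∀ i, 0 < lam i) (σ : ℂ) (hσ : σ.im ≠ 0) :
    ((gP n k v lam).map (algebraMap ℝ ℂ)).eval σ ≠ 0 := by
  rcases lt_or_gt_of_ne hσ with hneg | hpos
  · -- conjugate trick
    have hconj : ((gP n k v lam).map (algebraMap ℝ ℂ)).eval σ =
        (starRingEnd ℂ) (((gP n k v lam).map (algebraMap ℝ ℂ)).eval (starRingEnd ℂ σ)) := by
      rw [eval_map, eval_map, hom_eval₂]
      congr 1
      · ext x
        simp [Complex.conj_ofReal]
      · simp
    rw [hconj]
    intro h
    have h2 : ((gP n k v lam).map (algebraMap ℝ ℂ)).eval (starRingEnd ℂ σ) = 0 := by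
      have := congrArg (starRingEnd ℂ) h
      simpa using this
    have him : ((starRingEnd ℂ) σ).im = -σ.im := by simp
    have hpos2 : 0 < ((starRingEnd ℂ) σ).im := by rw [him]; linarith
    rw [gP_map_eval] at h2
    exact esymm_ne_zero n k hk hkn _ (fun i => by
      simp only [Complex.add_im, Complex.mul_im, Complex.ofReal_im, Complex.ofReal_re]
      nlinarith [hlam i, hpos2]) h2
  · rw [gP_map_eval]
    exact esymm_ne_zero n k hk hkn _ (fun i => by
      simp only [Complex.add_im, Complex.mul_im, Complex.ofReal_im, Complex.ofReal_re]
      nlinarith [hlam i, hpos])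

lemma gP_reversal (n k : ℕ) (lam v : Fin n → ℝ) (τ : ℂ) (hτ : τ ≠ 0) :
    ((gP n k lam v).map (algebraMap ℝ ℂ)).eval τ =
      τ ^ k * ((gP n k v lam).map (algebraMap ℝ ℂ)).eval τ⁻¹ := by
  rw [gP_map_eval, gP_map_eval, Finset.mul_sum]
  refine Finset.sum_congr rfl fun T hT => ?_
  have hcard : T.card = k := (Finset.mem_powersetCard_univ.mp hT)
  rw [← hcard, ← Finset.prod_const τ, ← Finset.prod_mul_distrib]
  refine Finset.prod_congr rfl fun i _ => ?_
  field_simp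
  ring

lemma gP_roots_real (n k : ℕ) (hk : 1 ≤ k) (hkn : k ≤ n) (lam v : Fin n → ℝ)
    (hlam : ∀ i, 0 < lam i) (τ : ℂ)
    (hroot : ((gP n k lam v).map (algebraMap ℝ ℂ)).eval τ = 0) : τ.im = 0 := by
  by_cases h0 : τ = 0
  · simp [h0]
  rw [gP_reversal n k lam v τ h0] at hroot
  have h2 : ((gP n k v lam).map (algebraMap ℝ ℂ)).eval τ⁻¹ = 0 := by
    rcases mul_eq_zero.mp hroot with h | h
    · exact absurd h (pow_ne_zero k h0)
    · exact h
  have him : (τ⁻¹).im = 0 := by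
    by_contra hne
    exact gT_ne_zero n k hk hkn lam v hlam τ⁻¹ hne h2
  have : τ = (τ⁻¹)⁻¹ := (inv_inv τ).symm
  rw [this, Complex.inv_im, him]
  simp

lemma prodD (m : Multiset ℂ) (hm : ∀ r ∈ m, r.im = 0) (x : ℝ) :
    ∃ a b c : ℝ, ((m.map fun r => (X : Polynomial ℂ) - C r).prod).eval (x : ℂ) = (a : ℂ) ∧
      (Polynomial.derivative ((m.map fun r => (X : Polynomial ℂ) - C r).prod)).eval (x : ℂ) = (b : ℂ) ∧
      (Polynomial.derivative (Polynomial.derivative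
        ((m.map fun r => (X : Polynomial ℂ) - C r).prod))).eval (x : ℂ) = (c : ℂ) ∧
      a * c ≤ b ^ 2 := by
  induction m using Multiset.induction_on with
  | empty =>
    refine ⟨1, 0, 0, by simp, by simp, by simp, by norm_num⟩
  | cons r s ih =>
    obtain ⟨a, b, c, ha, hb, hc, habc⟩ := ih (fun y hy => hm y (Multiset.mem_cons_of_mem hy))
    obtain ⟨rr, rfl⟩ : ∃ rr : ℝ, r = (rr : ℂ) :=
      ⟨r.re, by apply Complex.ext <;> simp [hm r (Multiset.mem_cons_self r s)]⟩
    set Q := (s.map fun r => (X : Polynomial ℂ) - C r).prod with hQ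
    have hexp : (((((rr : ℂ)) ::ₘ s).map fun r => (X : Polynomial ℂ) - C r).prod)
        = (X - C (rr : ℂ)) * Q := by
      rw [Multiset.map_cons, Multiset.prod_cons]
    have hd1 : Polynomial.derivative ((X - C (rr : ℂ)) * Q) =
        Q + (X - C (rr : ℂ)) * Polynomial.derivative Q := by
      rw [derivative_mul]; simp
    have hd2 : Polynomial.derivative (Q + (X - C (rr : ℂ)) * Polynomial.derivative Q) =
        2 * Polynomial.derivative Q +
          (X - C (rr : ℂ)) * Polynomial.derivative (Polynomial.derivative Q) := by
      rw [derivative_add, derivative_mul]; simp; ring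
    refine ⟨(x - rr) * a, a + (x - rr) * b, 2 * b + (x - rr) * c, ?_, ?_, ?_, ?_⟩
    · rw [hexp, eval_mul, ha]
      simp only [eval_sub, eval_X, eval_C]
      push_cast; ring
    · rw [hexp, hd1, eval_add, eval_mul, ha, hb]
      simp only [eval_sub, eval_X, eval_C]
      push_cast; ring
    · rw [hexp, hd1, hd2, eval_add, eval_mul, eval_mul, hb, hc]
      simp only [eval_sub, eval_X, eval_C, eval_ofNat]
      push_cast; ring
    · nlinarith [sq_nonneg a, sq_nonneg (x - rr),
        mul_le_mul_of_nonneg_left habc (sq_nonneg (x - rr))]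

lemma key_ineq (n k : ℕ) (hk : 1 ≤ k) (hkn : k ≤ n) (lam v : Fin n → ℝ)
    (hlam : ∀ i, 0 < lam i) (hg0 : (gP n k lam v).eval 0 ≠ 0) :
    (gP n k lam v).eval 0 *
      (Polynomial.derivative (Polynomial.derivative (gP n k lam v))).eval 0 ≤
      ((Polynomial.derivative (gP n k lam v)).eval 0) ^ 2 := by
  set g := gP n k lam v with hgdef
  set gc := g.map (algebraMap ℝ ℂ) with hgc
  have r0 : ((g.eval 0 : ℝ) : ℂ) = gc.eval 0 := by
    rw [hgc, eval_map, eval₂_at_zero, coeff_zero_eq_eval_zero, Complex.coe_algebraMap]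
  have r1 : (((Polynomial.derivative g).eval 0 : ℝ) : ℂ) = (Polynomial.derivative gc).eval 0 := by
    rw [hgc, derivative_map, eval_map, eval₂_at_zero, coeff_zero_eq_eval_zero,
      Complex.coe_algebraMap]
  have r2 : (((Polynomial.derivative (Polynomial.derivative g)).eval 0 : ℝ) : ℂ) =
      (Polynomial.derivative (Polynomial.derivative gc)).eval 0 := by
    rw [hgc, derivative_map, derivative_map, eval_map, eval₂_at_zero, coeff_zero_eq_eval_zero,
      Complex.coe_algebraMap]
  have hgne : gc ≠ 0 := by
    intro h
    apply hg0
    have : gc.eval 0 = 0 := by rw [h]; simp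
    rw [← r0] at this
    exact_mod_cast this
  have hsplit : gc = C gc.leadingCoeff * (gc.roots.map fun a => X - C a).prod :=
    (IsAlgClosed.splits gc).eq_prod_roots
  have hrootsreal : ∀ r ∈ gc.roots, r.im = 0 := by
    intro r hr
    exact gP_roots_real n k hk hkn lam v hlam r ((mem_roots hgne).mp hr)
  obtain ⟨a, b, c, ha, hb, hc, habc⟩ := prodD gc.roots hrootsreal 0
  push_cast at ha hb hc
  have hlc : gc.leadingCoeff = ((g.leadingCoeff : ℝ) : ℂ) := by
    rw [hgc, leadingCoeff_map_of_injective (fun x y h => by exact_mod_cast h)]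
    rfl
  set L := g.leadingCoeff with hL
  have e0 : gc.eval 0 = (L : ℂ) * a := by
    conv_lhs => rw [hsplit]
    rw [eval_mul, eval_C, hlc, ha]
  have e1 : (Polynomial.derivative gc).eval 0 = (L : ℂ) * b := by
    conv_lhs => rw [hsplit]
    rw [derivative_C_mul, eval_mul, eval_C, hlc, hb]
  have e2 : (Polynomial.derivative (Polynomial.derivative gc)).eval 0 = (L : ℂ) * c := by
    conv_lhs => rw [hsplit]
    rw [derivative_C_mul, derivative_C_mul, eval_mul, eval_C, hlc, hc]
  have q0 : g.eval 0 = L * a := by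
    have := r0.trans e0; exact_mod_cast this
  have q1 : (Polynomial.derivative g).eval 0 = L * b := by
    have := r1.trans e1; exact_mod_cast this
  have q2 : (Polynomial.derivative (Polynomial.derivative g)).eval 0 = L * c := by
    have := r2.trans e2; exact_mod_cast this
  rw [q0, q1, q2]
  nlinarith [mul_le_mul_of_nonneg_left habc (sq_nonneg L)]

/-- The three basic unscaled sums -/
def Av (n k : ℕ) (lam η : Fin n → ℝ) : ℝ :=
  ∑ T ∈ (univ : Finset (Fin n)).powersetCard k, (∏ i ∈ T, lam i) * (∑ p ∈ T, η p)
def Bv (n k : ℕ) (lam η : Fin n → ℝ) : ℝ :=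
  ∑ T ∈ (univ : Finset (Fin n)).powersetCard k, (∏ i ∈ T, lam i) * (∑ p ∈ T, η p) ^ 2
def Cv (n k : ℕ) (lam η : Fin n → ℝ) : ℝ :=
  ∑ T ∈ (univ : Finset (Fin n)).powersetCard k, (∏ i ∈ T, lam i) * (∑ p ∈ T, (η p) ^ 2)

lemma esymm_pos (n k : ℕ) (hkn : k ≤ n) (lam : Fin n → ℝ) (hlam : ∀ i, 0 < lam i) :
    0 < esymmFun n k lam := by
  apply Finset.sum_pos
  · intro T _
    exact Finset.prod_pos (fun i _ => hlam i)
  · rw [Finset.powersetCard_nonempty]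
    simpa using hkn

lemma derivative_finset_prod {ι : Type*} [DecidableEq ι] (T : Finset ι) (f : ι → Polynomial ℝ) :
    Polynomial.derivative (∏ i ∈ T, f i) =
      ∑ i ∈ T, (∏ j ∈ T.erase i, f j) * Polynomial.derivative (f i) := by
  induction T using Finset.cons_induction with
  | empty => simp
  | cons x T hx ih =>
    rw [Finset.prod_cons, derivative_mul, ih, Finset.sum_cons, Finset.erase_cons,
      Finset.mul_sum]
    congr 1
    · ring
    · refine Finset.sum_congr rfl fun i hi => ?_
      rw [Finset.erase_cons_of_ne hx (fun h => hx (h ▸ hi)), Finset.prod_cons]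
      ring

lemma gP_eval_zero (n k : ℕ) (lam v : Fin n → ℝ) :
    (gP n k lam v).eval 0 = esymmFun n k lam := by
  rw [gP, eval_finset_sum, esymmFun]
  refine Finset.sum_congr rfl fun T _ => ?_
  rw [eval_prod]
  simp

lemma gP_deriv_eval_zero (n k : ℕ) (lam η : Fin n → ℝ) :
    (Polynomial.derivative (gP n k lam (fun i => lam i * η i))).eval 0 = Av n k lam η := by
  rw [gP, derivative_sum, eval_finset_sum, Av]
  refine Finset.sum_congr rfl fun T _ => ?_
  rw [derivative_finset_prod, eval_finset_sum]
  have : ∀ i ∈ T, ((∏ j ∈ T.erase i, (C (lam j) + C (lam j * η j) * X)) *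
      Polynomial.derivative (C (lam i) + C (lam i * η i) * X)).eval 0
      = η i * ∏ j ∈ T, lam j := by
    intro i hi
    rw [derivative_add, derivative_C, derivative_C_mul, derivative_X]
    rw [eval_mul, eval_prod]
    simp only [eval_add, eval_C, eval_mul, eval_X, mul_zero, add_zero, zero_add, mul_one]
    rw [← Finset.mul_prod_erase T lam hi]
    ring
  rw [Finset.sum_congr rfl this, Finset.mul_sum]
  exact Finset.sum_congr rfl fun i _ => by ring

lemma gP_deriv2_eval_zero (n k : ℕ) (lam η : Fin n → ℝ) :
    (Polynomial.derivative (Polynomial.derivative (gP n k lam (fun i => lam i * η i)))).eval 0 =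
      Bv n k lam η - Cv n k lam η := by
  rw [gP, derivative_sum, derivative_sum, eval_finset_sum]
  rw [Bv, Cv, ← Finset.sum_sub_distrib]
  refine Finset.sum_congr rfl fun T _ => ?_
  rw [derivative_finset_prod, derivative_sum, eval_finset_sum]
  have step : ∀ i ∈ T,
      (Polynomial.derivative ((∏ j ∈ T.erase i, (C (lam j) + C (lam j * η j) * X)) *
        Polynomial.derivative (C (lam i) + C (lam i * η i) * X))).eval 0
      = (∏ p ∈ T, lam p) * (η i * (∑ p ∈ T.erase i, η p)) := by
    intro i hi
    have hlin : ∀ a b : ℝ, Polynomial.derivative (C a + C b * X) = C b := by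
      intro a b; simp
    rw [hlin, derivative_mul, derivative_C, mul_zero, add_zero, eval_mul, eval_C]
    rw [derivative_finset_prod, eval_finset_sum]
    have inner : ∀ j ∈ T.erase i,
        ((∏ p ∈ (T.erase i).erase j, (C (lam p) + C (lam p * η p) * X)) *
          Polynomial.derivative (C (lam j) + C (lam j * η j) * X)).eval 0
        = (∏ p ∈ (T.erase i).erase j, lam p) * (lam j * η j) := by
      intro j hj
      have hlin2 : ∀ a b : ℝ, Polynomial.derivative (C a + C b * X) = C b := by
        intro a b; simp
      rw [hlin2, eval_mul, eval_prod]
      simp only [eval_add, eval_C, eval_mul, eval_X, mul_zero, add_zero, zero_add, mul_one]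
    have inner2 : ∀ j ∈ T.erase i, (∏ p ∈ (T.erase i).erase j, lam p) * (lam j * η j)
        = (∏ p ∈ T.erase i, lam p) * η j := by
      intro j hj
      rw [← Finset.mul_prod_erase (T.erase i) lam hj]
      ring
    rw [Finset.sum_congr rfl inner, Finset.sum_congr rfl inner2, ← Finset.mul_sum,
      ← Finset.mul_prod_erase T lam hi]
    ring
  rw [Finset.sum_congr rfl step, ← Finset.mul_sum]
  have hsum : ∑ i ∈ T, η i * (∑ p ∈ T.erase i, η p)
      = (∑ p ∈ T, η p) ^ 2 - ∑ p ∈ T, (η p) ^ 2 := by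
    have : ∀ i ∈ T, η i * (∑ p ∈ T.erase i, η p) = η i * (∑ p ∈ T, η p) - (η i) ^ 2 := by
      intro i hi
      rw [Finset.sum_erase_eq_sub hi]
      ring
    rw [Finset.sum_congr rfl this, Finset.sum_sub_distrib, ← Finset.sum_mul]
    ring
  rw [hsum]
  ring

lemma qform_nonpos (n k : ℕ) (hk : 1 ≤ k) (hkn : k ≤ n) (lam : Fin n → ℝ)
    (hlam : ∀ i, 0 < lam i) (η : Fin n → ℝ) : Qform n k lam η ≤ 0 := by
  have hS0 : 0 < esymmFun n k lam := esymm_pos n k hkn lam hlam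
  have hkey := key_ineq n k hk hkn lam (fun i => lam i * η i) hlam
    (by rw [gP_eval_zero]; exact ne_of_gt hS0)
  rw [gP_eval_zero, gP_deriv_eval_zero, gP_deriv2_eval_zero] at hkey
  have hq : Qform n k lam η =
      -(Av n k lam η / esymmFun n k lam) ^ 2 + Bv n k lam η / esymmFun n k lam -
        Cv n k lam η / esymmFun n k lam := by
    simp only [Qform, gam, div_mul_eq_mul_div, ← Finset.sum_div]
    rfl
  set S0 := esymmFun n k lam
  set A := Av n k lam η
  set B := Bv n k lam η
  set Cc := Cv n k lam η
  have h2 : -(A / S0) ^ 2 + B / S0 - Cc / S0 = (-(A ^ 2) + S0 * (B - Cc)) / S0 ^ 2 := by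
    field_simp
    ring
  rw [hq, h2]
  apply div_nonpos_of_nonpos_of_nonneg
  · nlinarith
  · positivity

lemma pair_identity (n k : ℕ) (hk2 : 2 ≤ k) (lam : Fin n → ℝ) (i j : Fin n) (hij : i ≠ j) :
    ∑ T ∈ (univ : Finset (Fin n)).powersetCard k, (if i ∈ T ∧ j ∈ T then ∏ p ∈ T, lam p else 0)
      = lam i * lam j * esymmOmit2 n (k - 2) i j lam := by
  rw [Finset.sum_ite, Finset.sum_const_zero, add_zero]
  rw [esymmOmit2, Finset.mul_sum]
  refine (Finset.sum_nbij' (fun T => (T.erase i).erase j) (fun u => insert i (insert j u))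
    ?_ ?_ ?_ ?_ ?_).symm.symm
  · -- maps filtered T into powersetCard (k-2) of univ \ {i,j}
    intro T hT
    simp only [Finset.mem_filter, Finset.mem_powersetCard_univ] at hT
    have hcard := hT.1
    have hiT := hT.2.1
    have hjT := hT.2.2
    rw [Finset.mem_powersetCard]
    constructor
    · intro x hx
      simp only [Finset.mem_sdiff, Finset.mem_univ, true_and, Finset.mem_insert,
        Finset.mem_singleton]
      have hxj := Finset.ne_of_mem_erase hx
      have hxi := Finset.ne_of_mem_erase (Finset.mem_of_mem_erase hx)
      tauto
    · rw [Finset.card_erase_of_mem, Finset.card_erase_of_mem hiT, hcard]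
      · omega
      · exact Finset.mem_erase.mpr ⟨fun h => hij h.symm, hjT⟩
  · intro u hu
    rw [Finset.mem_powersetCard] at hu
    obtain ⟨hsub, hcard⟩ := hu
    have hiu : i ∉ u := fun h => by simpa using (hsub h)
    have hju : j ∉ u := fun h => by simpa using (hsub h)
    have hjins : i ∉ insert j u := by
      simp only [Finset.mem_insert]
      tauto
    simp only [Finset.mem_filter, Finset.mem_powersetCard_univ]
    refine ⟨?_, Finset.mem_insert_self i _, Finset.mem_insert_of_mem (Finset.mem_insert_self j u)⟩
    rw [Finset.card_insert_of_notMem hjins, Finset.card_insert_of_notMem hju, hcard]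
    omega
  · intro T hT
    simp only [Finset.mem_filter] at hT
    have hiT := hT.2.1
    have hjT := hT.2.2
    rw [Finset.insert_erase (Finset.mem_erase.mpr ⟨fun h => hij h.symm, hjT⟩),
      Finset.insert_erase hiT]
  · intro u hu
    rw [Finset.mem_powersetCard] at hu
    have hiu : i ∉ u := fun h => by simpa using (hu.1 h)
    have hju : j ∉ u := fun h => by simpa using (hu.1 h)
    have hjins : i ∉ insert j u := by simp only [Finset.mem_insert]; tauto
    rw [Finset.erase_insert hjins, Finset.erase_insert hju]
  · intro T hT
    simp only [Finset.mem_filter] at hT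
    have hiT := hT.2.1
    have hjT := hT.2.2
    have hji : j ∈ T.erase i := Finset.mem_erase.mpr ⟨fun h => hij h.symm, hjT⟩
    rw [← Finset.mul_prod_erase T lam hiT, ← Finset.mul_prod_erase (T.erase i) lam hji]
    ring

def Rv (n k : ℕ) (lam η δ : Fin n → ℝ) : ℝ :=
  ∑ T ∈ (univ : Finset (Fin n)).powersetCard k,
    (∏ i ∈ T, lam i) * ((∑ p ∈ T, η p) * (∑ p ∈ T, δ p) - ∑ p ∈ T, η p * δ p)
noncomputable def Uv (n k : ℕ) (lam η δ : Fin n → ℝ) : ℝ :=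
  -(Av n k lam η * Av n k lam δ) + esymmFun n k lam * Rv n k lam η δ

lemma Qform_scaled (n k : ℕ) (lam η : Fin n → ℝ) (hS : esymmFun n k lam ≠ 0) :
    (esymmFun n k lam) ^ 2 * Qform n k lam η = Uv n k lam η η := by
  have hq : Qform n k lam η =
      -(Av n k lam η / esymmFun n k lam) ^ 2 + Rv n k lam η η / esymmFun n k lam := by
    have h1 : ∑ t ∈ (univ : Finset (Fin n)).powersetCard k,
        gam n k lam t * (∑ p ∈ t, η p) ^ 2 -
        ∑ t ∈ (univ : Finset (Fin n)).powersetCard k,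
        gam n k lam t * ∑ p ∈ t, (η p) ^ 2 = Rv n k lam η η / esymmFun n k lam := by
      rw [Rv, Finset.sum_div, ← Finset.sum_sub_distrib]
      refine Finset.sum_congr rfl fun T _ => ?_
      simp only [gam]
      have : ∀ p, η p * η p = (η p) ^ 2 := fun p => by ring
      rw [Finset.sum_congr rfl (fun p _ => this p)]
      ring
    have h0 : (∑ t ∈ (univ : Finset (Fin n)).powersetCard k,
        gam n k lam t * ∑ p ∈ t, η p) = Av n k lam η / esymmFun n k lam := by
      rw [Av, Finset.sum_div]
      exact Finset.sum_congr rfl fun T _ => by simp only [gam]; ring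
    rw [Qform, add_sub_assoc, h1, h0]
  rw [hq, Uv]
  field_simp

lemma Av_add (n k : ℕ) (lam η δ : Fin n → ℝ) (s : ℝ) :
    Av n k lam (fun i => η i + s * δ i) = Av n k lam η + s * Av n k lam δ := by
  rw [Av, Av, Av, Finset.mul_sum, ← Finset.sum_add_distrib]
  refine Finset.sum_congr rfl fun T _ => ?_
  rw [Finset.sum_add_distrib, ← Finset.mul_sum]
  ring

lemma Rv_symm (n k : ℕ) (lam η δ : Fin n → ℝ) : Rv n k lam η δ = Rv n k lam δ η := by
  rw [Rv, Rv]
  refine Finset.sum_congr rfl fun T _ => ?_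
  have : ∀ p, η p * δ p = δ p * η p := fun p => by ring
  rw [Finset.sum_congr rfl (fun p _ => this p)]
  ring

lemma Rv_expand (n k : ℕ) (lam η δ : Fin n → ℝ) (s : ℝ) :
    Rv n k lam (fun i => η i + s * δ i) (fun i => η i + s * δ i) =
      Rv n k lam η η + 2 * s * Rv n k lam η δ + s ^ 2 * Rv n k lam δ δ := by
  rw [Rv, Rv, Rv, Rv]
  have step : ∀ T ∈ (univ : Finset (Fin n)).powersetCard k,
      (∏ i ∈ T, lam i) * ((∑ p ∈ T, (η p + s * δ p)) * (∑ p ∈ T, (η p + s * δ p)) -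
        ∑ p ∈ T, (η p + s * δ p) * (η p + s * δ p)) =
      (∏ i ∈ T, lam i) * ((∑ p ∈ T, η p) * (∑ p ∈ T, η p) - ∑ p ∈ T, η p * η p) +
        2 * s * ((∏ i ∈ T, lam i) * ((∑ p ∈ T, η p) * (∑ p ∈ T, δ p) - ∑ p ∈ T, η p * δ p)) +
        s ^ 2 * ((∏ i ∈ T, lam i) * ((∑ p ∈ T, δ p) * (∑ p ∈ T, δ p) - ∑ p ∈ T, δ p * δ p)) := by
    intro T _
    have h1 : ∑ p ∈ T, (η p + s * δ p) = (∑ p ∈ T, η p) + s * ∑ p ∈ T, δ p := by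
      rw [Finset.sum_add_distrib, ← Finset.mul_sum]
    have h2 : ∑ p ∈ T, (η p + s * δ p) * (η p + s * δ p) =
        (∑ p ∈ T, η p * η p) + 2 * s * (∑ p ∈ T, η p * δ p) + s ^ 2 * ∑ p ∈ T, δ p * δ p := by
      rw [Finset.mul_sum, Finset.mul_sum, ← Finset.sum_add_distrib, ← Finset.sum_add_distrib]
      exact Finset.sum_congr rfl fun p _ => by ring
    rw [h1, h2]
    ring
  rw [Finset.sum_congr rfl step, Finset.sum_add_distrib, Finset.sum_add_distrib,
    ← Finset.mul_sum, ← Finset.mul_sum]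

lemma Uv_expand (n k : ℕ) (lam η δ : Fin n → ℝ) (s : ℝ) :
    Uv n k lam (fun i => η i + s * δ i) (fun i => η i + s * δ i) =
      Uv n k lam η η + 2 * s * Uv n k lam η δ + s ^ 2 * Uv n k lam δ δ := by
  simp only [Uv, Av_add, Rv_expand]
  ring

lemma polar_vanish (n k : ℕ) (lam : Fin n → ℝ) (η₀ : Fin n → ℝ)
    (hU : ∀ η : Fin n → ℝ, Uv n k lam η η ≤ 0) (h0 : Uv n k lam η₀ η₀ = 0) :
    ∀ δ : Fin n → ℝ, Uv n k lam η₀ δ = 0 := by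
  intro δ
  by_contra hB
  set B := Uv n k lam η₀ δ with hBdef
  set Q := Uv n k lam δ δ with hQdef
  have hQ0 : Q ≤ 0 := hU δ
  have key : ∀ s : ℝ, 2 * s * B + s ^ 2 * Q ≤ 0 := by
    intro s
    have := hU (fun i => η₀ i + s * δ i)
    rw [Uv_expand, h0, zero_add] at this
    exact this
  set t := 1 / (1 + |Q|) with htdef
  have ht : 0 < t := by positivity
  have htQ : t * |Q| < 1 := by
    rw [htdef, div_mul_eq_mul_div, div_lt_one (by positivity)]
    linarith [abs_nonneg Q]
  have hk := key (t * B)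
  have hB2 : 0 < B ^ 2 := by positivity
  nlinarith [mul_pos ht hB2, htQ, neg_abs_le Q, abs_nonneg Q,
    mul_nonneg (mul_nonneg ht.le ht.le) (sq_nonneg B),
    mul_lt_mul_of_pos_left htQ (mul_pos ht hB2)]

lemma Av_one (n k : ℕ) (lam : Fin n → ℝ) :
    Av n k lam (fun _ => 1) = (k : ℝ) * esymmFun n k lam := by
  rw [Av, esymmFun, Finset.mul_sum]
  refine Finset.sum_congr rfl fun T hT => ?_
  rw [Finset.sum_const, Finset.mem_powersetCard_univ.mp hT]
  simp [mul_comm]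

lemma Rv_one (n k : ℕ) (lam η : Fin n → ℝ) :
    Rv n k lam η (fun _ => 1) = ((k : ℝ) - 1) * Av n k lam η := by
  rw [Rv, Av, Finset.mul_sum]
  refine Finset.sum_congr rfl fun T hT => ?_
  rw [Finset.sum_const, Finset.mem_powersetCard_univ.mp hT]
  have : ∑ p ∈ T, η p * 1 = ∑ p ∈ T, η p := by
    exact Finset.sum_congr rfl fun p _ => by ring
  rw [this]
  simp only [nsmul_eq_mul]
  ring

lemma Av_vanish (n k : ℕ) (hk2 : 2 ≤ k) (lam : Fin n → ℝ) (η₀ : Fin n → ℝ)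
    (hS : 0 < esymmFun n k lam)
    (hpolar : ∀ δ : Fin n → ℝ, Uv n k lam η₀ δ = 0) : Av n k lam η₀ = 0 := by
  have h1 := hpolar (fun _ => 1)
  rw [Uv, Av_one, Rv_one] at h1
  have hS' : esymmFun n k lam ≠ 0 := ne_of_gt hS
  -- -(A * k S) + S ((k-1) A) = -S A = 0
  have : -(esymmFun n k lam * Av n k lam η₀) = 0 := by
    rw [← h1]
    ring
  have h2 : esymmFun n k lam * Av n k lam η₀ = 0 := by linarith
  rcases mul_eq_zero.mp h2 with h | h
  · exact absurd h hS'
  · exact h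

lemma Rv_basis (n k : ℕ) (hk2 : 2 ≤ k) (lam : Fin n → ℝ) (η₀ : Fin n → ℝ) (i : Fin n) :
    Rv n k lam η₀ (fun p => if p = i then 1 else 0) =
      ∑ j ∈ Finset.univ.erase i,
        η₀ j * (lam i * lam j * esymmOmit2 n (k - 2) i j lam) := by
  rw [Rv]
  have step : ∀ T ∈ (univ : Finset (Fin n)).powersetCard k,
      (∏ p ∈ T, lam p) * ((∑ p ∈ T, η₀ p) * (∑ p ∈ T, (if p = i then (1:ℝ) else 0)) -
        ∑ p ∈ T, η₀ p * (if p = i then 1 else 0)) =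
      ∑ j ∈ Finset.univ.erase i,
        η₀ j * (if i ∈ T ∧ j ∈ T then ∏ p ∈ T, lam p else 0) := by
    intro T _
    rw [Finset.sum_ite_eq' T i (fun _ => (1:ℝ))]
    have hm : ∑ p ∈ T, η₀ p * (if p = i then (1:ℝ) else 0) =
        if i ∈ T then η₀ i else 0 := by
      rw [← Finset.sum_ite_eq' T i η₀]
      exact Finset.sum_congr rfl fun p _ => by
        by_cases h : p = i <;> simp [h]
    rw [hm]
    by_cases hiT : i ∈ T
    · rw [if_pos hiT, if_pos hiT, mul_one]
      have hss : T.erase i ⊆ Finset.univ.erase i :=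
        Finset.erase_subset_erase i (Finset.subset_univ T)
      have hvan : ∀ x ∈ Finset.univ.erase i, x ∉ T.erase i →
          η₀ x * (if i ∈ T ∧ x ∈ T then ∏ p ∈ T, lam p else 0) = 0 := by
        intro x hx hxT
        have hxi : x ≠ i := (Finset.mem_erase.mp hx).1
        have hxT2 : x ∉ T := fun h => hxT (Finset.mem_erase.mpr ⟨hxi, h⟩)
        have : ¬(i ∈ T ∧ x ∈ T) := fun hc => hxT2 hc.2
        rw [if_neg this, mul_zero]
      have hsub : ∑ j ∈ Finset.univ.erase i,
          η₀ j * (if i ∈ T ∧ j ∈ T then ∏ p ∈ T, lam p else 0)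
          = ∑ j ∈ T.erase i, η₀ j * ∏ p ∈ T, lam p := by
        rw [← Finset.sum_subset hss hvan]
        refine Finset.sum_congr rfl fun j hj => ?_
        have hjT := Finset.mem_of_mem_erase hj
        rw [if_pos ⟨hiT, hjT⟩]
      rw [hsub, ← Finset.sum_mul, Finset.sum_erase_eq_sub hiT]
      ring
    · rw [if_neg hiT, if_neg hiT]
      have hz : ∀ j ∈ Finset.univ.erase i,
          η₀ j * (if i ∈ T ∧ j ∈ T then ∏ p ∈ T, lam p else 0) = 0 := by
        intro j _
        have : ¬(i ∈ T ∧ j ∈ T) := fun hc => hiT hc.1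
        rw [if_neg this, mul_zero]
      rw [Finset.sum_congr rfl hz]
      simp
  rw [Finset.sum_congr rfl step, Finset.sum_comm]
  refine Finset.sum_congr rfl fun j hj => ?_
  rw [← Finset.mul_sum, pair_identity n k hk2 lam i j (fun h => (Finset.mem_erase.mp hj).1 h.symm)]

lemma part1 (n k : ℕ) (hn : 2 ≤ n) (hk2 : 2 ≤ k) (hkn : k ≤ n - 1)
    (lam : Fin n → ℝ) (hlam : ∀ i, 0 < lam i)
    (hsemi : ∀ η : Fin n → ℝ, Qform n k lam η ≤ 0)
    (η₀ : Fin n → ℝ) (hη₀ : η₀ ≠ 0) (hQ0 : Qform n k lam η₀ = 0) :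
    (Gmat n k lam).det = 0 := by
  have hkn' : k ≤ n := le_trans hkn (Nat.sub_le n 1)
  have hS : 0 < esymmFun n k lam := esymm_pos n k hkn' lam hlam
  have hS' : esymmFun n k lam ≠ 0 := ne_of_gt hS
  have hU : ∀ η : Fin n → ℝ, Uv n k lam η η ≤ 0 := by
    intro η
    rw [← Qform_scaled n k lam η hS']
    have := hsemi η
    nlinarith [sq_nonneg (esymmFun n k lam)]
  have h0 : Uv n k lam η₀ η₀ = 0 := by
    rw [← Qform_scaled n k lam η₀ hS', hQ0, mul_zero]
  have hpolar := polar_vanish n k lam η₀ hU h0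
  have hAv : Av n k lam η₀ = 0 := Av_vanish n k hk2 lam η₀ hS hpolar
  -- the kernel vector
  set ζ : Fin n → ℝ := fun j => lam j * η₀ j with hζ
  have hmul : (Gmat n k lam).mulVec ζ = 0 := by
    funext i
    have hbasis := hpolar (fun p => if p = i then 1 else 0)
    rw [Uv, hAv, Rv_basis n k hk2 lam η₀ i] at hbasis
    simp only [zero_mul, neg_zero, zero_add] at hbasis
    have hRv : ∑ j ∈ Finset.univ.erase i,
        η₀ j * (lam i * lam j * esymmOmit2 n (k - 2) i j lam) = 0 := by
      rcases mul_eq_zero.mp hbasis with h | h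
      · exact absurd h hS'
      · exact h
    have hexp : (Gmat n k lam).mulVec ζ i =
        ∑ j ∈ Finset.univ.erase i, esymmOmit2 n (k - 2) i j lam * (lam j * η₀ j) := by
      have hrfl : (Gmat n k lam).mulVec ζ i = ∑ j, Gmat n k lam i j * ζ j := rfl
      rw [hrfl,
        ← Finset.add_sum_erase Finset.univ (fun j => Gmat n k lam i j * ζ j) (Finset.mem_univ i)]
      simp only [Gmat, Matrix.of_apply, eq_self_iff_true, if_true, zero_mul, zero_add]
      exact Finset.sum_congr rfl fun j hj =>
        by rw [if_neg (fun h : i = j => (Finset.mem_erase.mp hj).1 h.symm)]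
    have hfinal : lam i * ((Gmat n k lam).mulVec ζ i) = 0 := by
      rw [hexp, Finset.mul_sum, ← hRv]
      exact Finset.sum_congr rfl fun j _ => by ring
    have hlami := ne_of_gt (hlam i)
    have := mul_eq_zero.mp hfinal
    simp only [Pi.zero_apply]
    tauto
  have hζne : ζ ≠ 0 := by
    obtain ⟨i, hi⟩ := Function.ne_iff.mp hη₀
    intro h
    apply hi
    have := congrFun h i
    simp only [hζ, Pi.zero_apply] at this
    rcases mul_eq_zero.mp this with h' | h'
    · exact absurd h' (ne_of_gt (hlam i))
    · exact h'
  exact (Matrix.exists_mulVec_eq_zero_iff).mp ⟨ζ, hζne, hmul⟩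


end St17

open St17

/-- If the (negative semidefinite) form η ↦ d²f_k(λ, λη) vanishes at some
η̄ ≠ 0 then G_k(λ) is singular; conversely if G_k(λ) is nonsingular then the
form is negative definite. -/
theorem stmt17 (n k : ℕ) (hn : 2 ≤ n) (hk2 : 2 ≤ k) (hkn : k ≤ n - 1)
    (lam : Fin n → ℝ) (hlam : ∀ i, 0 < lam i) :
    ((∀ η : Fin n → ℝ, Qform n k lam η ≤ 0) →
      ∀ η₀ : Fin n → ℝ, η₀ ≠ 0 → Qform n k lam η₀ = 0 → (Gmat n k lam).det = 0) ∧
    ((Gmat n k lam).det ≠ 0 →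
      ∀ η : Fin n → ℝ, η ≠ 0 → Qform n k lam η < 0) := by
  constructor
  · intro hsemi η₀ hη₀ hQ0
    exact part1 n k hn hk2 hkn lam hlam hsemi η₀ hη₀ hQ0
  · intro hdet η hη
    have hkn' : k ≤ n := le_trans hkn (Nat.sub_le n 1)
    have hk1 : 1 ≤ k := le_trans (by norm_num) hk2
    have hle := qform_nonpos n k hk1 hkn' lam hlam η
    rcases lt_or_eq_of_le hle with h | h
    · exact h
    · exact absurd (part1 n k hn hk2 hkn lam hlam
        (qform_nonpos n k hk1 hkn' lam hlam) η hη h) hdet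
end
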